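/- Let U ~ Uniform(0,1), ε uniform on {−1,+1}, and W a real random variable with E|W|^α < ∞, all three independent, where 0 < α < 2. Then λ^α P(|ε U^{−1/α} W| > λ) → E|W|^α as λ → ∞. -/

import Mathlib

open MeasureTheory ProbabilityTheory Real Filter
open scoped ENNReal

/-- For `U ∼ Uniform(0,1)`, `ε` uniform on `{−1,+1}`, `W` with `E|W|^α < ∞`, all
independent (`0 < α < 2`): `λ^α P(|ε U^{−1/α} W| > λ) → E|W|^α` as `λ → ∞`. -/
theorem stmt10 {Ω : Type*} [MeasureSpace Ω] [IsProbabilityMeasure (ℙ : Measure Ω)]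
    (α : ℝ) (hα : 0 < α) (hα2 : α < 2)
    (ε U W : Ω → ℝ) (hε : Measurable ε) (hU : Measurable U) (hW : Measurable W)
    (hεlaw : Measure.map ε ℙ
      = (1/2 : ℝ≥0∞) • Measure.dirac (-1 : ℝ) + (1/2 : ℝ≥0∞) • Measure.dirac (1 : ℝ))
    (hUlaw : Measure.map U ℙ = volume.restrict (Set.Ioo (0:ℝ) 1))
    (hindep : iIndepFun ![ε, U, W] ℙ)
    (hmom : Integrable (fun ω => |W ω| ^ α) ℙ) :
    Tendsto
      (fun lam : ℝ =>
        lam ^ α * (ℙ {ω | |ε ω * U ω ^ (-(1/α)) * W ω| > lam}).toReal)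
      atTop (nhds (∫ ω, |W ω| ^ α ∂ℙ)) := by
  -- a.e. ε ∈ {-1, 1}
  have hsεm : MeasurableSet ({-1, 1} : Set ℝ) := by measurability
  have hεfull : ℙ (ε ⁻¹' {-1, 1}) = 1 := by
    rw [← Measure.map_apply hε hsεm, hεlaw]
    simp [Measure.dirac_apply, ENNReal.inv_two_add_inv_two]
  have hεae : ∀ᵐ ω ∂ℙ, ε ω ∈ ({-1, 1} : Set ℝ) := by
    rw [ae_iff]
    have : {ω | ¬ ε ω ∈ ({-1, 1} : Set ℝ)} = (ε ⁻¹' {-1, 1})ᶜ := rfl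
    rw [this, measure_compl (hε hsεm) (measure_ne_top _ _), hεfull, measure_univ, tsub_self]
  -- a.e. U ∈ (0, 1)
  have hUfull : ℙ (U ⁻¹' Set.Ioo 0 1) = 1 := by
    rw [← Measure.map_apply hU measurableSet_Ioo, hUlaw,
      Measure.restrict_apply measurableSet_Ioo, Set.inter_self, Real.volume_Ioo]
    norm_num
  have hUae : ∀ᵐ ω ∂ℙ, U ω ∈ Set.Ioo (0:ℝ) 1 := by
    rw [ae_iff]
    have : {ω | ¬ U ω ∈ Set.Ioo (0:ℝ) 1} = (U ⁻¹' Set.Ioo 0 1)ᶜ := rfl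
    rw [this, measure_compl (hU measurableSet_Ioo) (measure_ne_top _ _), hUfull, measure_univ,
      tsub_self]
  -- independence of W and U
  have hWU : IndepFun W U ℙ := by
    have := hindep.indepFun (show (2 : Fin 3) ≠ 1 by decide)
    simpa using this
  have hmap : Measure.map (fun ω => (W ω, U ω)) ℙ = (Measure.map W ℙ).prod (Measure.map U ℙ) :=
    (indepFun_iff_map_prod_eq_prod_map_map hW.aemeasurable hU.aemeasurable).mp hWU
  -- key identity for lam > 0
  have key : ∀ lam : ℝ, 0 < lam →
      lam ^ α * (ℙ {ω | |ε ω * U ω ^ (-(1/α)) * W ω| > lam}).toReal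
        = ∫ ω, min (lam ^ α) (|W ω| ^ α) ∂ℙ := by
    intro lam hlam
    have hlamα : 0 < lam ^ α := Real.rpow_pos_of_pos hlam α
    -- the event coincides a.e. with {λ^α U < |W|^α}
    have hsets : {ω | |ε ω * U ω ^ (-(1/α)) * W ω| > lam}
        =ᵐ[ℙ] {ω | lam ^ α * U ω < |W ω| ^ α} := by
      rw [Filter.eventuallyEq_set]
      filter_upwards [hεae, hUae] with ω hεω hUω
      obtain ⟨hu0, hu1⟩ := hUω
      have hεabs : |ε ω| = 1 := by
        rcases hεω with h | h <;> simp_all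
      have habs : |ε ω * U ω ^ (-(1/α)) * W ω| = U ω ^ (-(1/α)) * |W ω| := by
        rw [abs_mul, abs_mul, hεabs, one_mul,
          abs_of_pos (Real.rpow_pos_of_pos hu0 _)]
      simp only [Set.mem_setOf_eq, gt_iff_lt, habs]
      have h1 : lam < U ω ^ (-(1/α)) * |W ω|
          ↔ lam ^ α < (U ω ^ (-(1/α)) * |W ω|) ^ α :=
        (Real.rpow_lt_rpow_iff hlam.le (by positivity) hα).symm
      have h2 : (U ω ^ (-(1/α)) * |W ω|) ^ α = (U ω)⁻¹ * |W ω| ^ α := by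
        rw [Real.mul_rpow (by positivity) (abs_nonneg _), ← Real.rpow_mul hu0.le,
          show (-(1/α)) * α = -1 by field_simp, Real.rpow_neg_one]
      rw [h1, h2, inv_mul_eq_div, lt_div_iff₀ hu0]
    have hT : MeasurableSet {p : ℝ × ℝ | lam ^ α * p.2 < |p.1| ^ α} := by
      apply measurableSet_lt <;> fun_prop
    have hmeas1 : ℙ {ω | lam ^ α * U ω < |W ω| ^ α}
        = ((Measure.map W ℙ).prod (Measure.map U ℙ)) {p : ℝ × ℝ | lam ^ α * p.2 < |p.1| ^ α} := by
      rw [← hmap, Measure.map_apply (hW.prodMk hU) hT]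
      rfl
    have hker : ∀ w : ℝ,
        (Measure.map U ℙ) (Prod.mk w ⁻¹' {p : ℝ × ℝ | lam ^ α * p.2 < |p.1| ^ α})
          = ENNReal.ofReal (min 1 (|w| ^ α / lam ^ α)) := by
      intro w
      have hpre : Prod.mk w ⁻¹' {p : ℝ × ℝ | lam ^ α * p.2 < |p.1| ^ α}
          = Set.Iio (|w| ^ α / lam ^ α) := by
        ext u
        simp only [Set.mem_preimage, Set.mem_setOf_eq, Set.mem_Iio]
        rw [lt_div_iff₀ hlamα, mul_comm]
      have hinter : Set.Iio (|w| ^ α / lam ^ α) ∩ Set.Ioo (0:ℝ) 1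
          = Set.Ioo 0 (min 1 (|w| ^ α / lam ^ α)) := by
        ext u
        simp only [Set.mem_inter_iff, Set.mem_Iio, Set.mem_Ioo, lt_min_iff]
        tauto
      rw [hpre, hUlaw, Measure.restrict_apply measurableSet_Iio, hinter,
        Real.volume_Ioo, sub_zero]
    have hprod : ((Measure.map W ℙ).prod (Measure.map U ℙ)) {p : ℝ × ℝ | lam ^ α * p.2 < |p.1| ^ α}
        = ∫⁻ ω, ENNReal.ofReal (min 1 (|W ω| ^ α / lam ^ α)) ∂ℙ := by
      rw [Measure.prod_apply hT]
      simp_rw [hker]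
      rw [lintegral_map (Measurable.ennreal_ofReal (by fun_prop)) hW]
    have hgmeas : Measurable fun ω => min 1 (|W ω| ^ α / lam ^ α) := by fun_prop
    have hgnn : 0 ≤ᵐ[ℙ] fun ω => min 1 (|W ω| ^ α / lam ^ α) :=
      ae_of_all _ fun ω => le_min zero_le_one (by positivity)
    have hint : ∫ ω, min 1 (|W ω| ^ α / lam ^ α) ∂ℙ
        = (∫⁻ ω, ENNReal.ofReal (min 1 (|W ω| ^ α / lam ^ α)) ∂ℙ).toReal :=
      integral_eq_lintegral_of_nonneg_ae hgnn hgmeas.aestronglyMeasurable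
    rw [measure_congr hsets, hmeas1, hprod, ← hint, ← integral_const_mul]
    refine integral_congr_ae (ae_of_all _ fun ω => ?_)
    show lam ^ α * min 1 (|W ω| ^ α / lam ^ α) = min (lam ^ α) (|W ω| ^ α)
    rw [mul_min_of_nonneg _ _ hlamα.le, mul_one]
    congr 1
    field_simp
  -- dominated convergence
  have hαtop : Tendsto (fun lam : ℝ => lam ^ α) atTop atTop :=
    tendsto_rpow_atTop hα
  have hDCT : Tendsto (fun lam : ℝ => ∫ ω, min (lam ^ α) (|W ω| ^ α) ∂ℙ) atTop
      (nhds (∫ ω, |W ω| ^ α ∂ℙ)) := by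
    refine tendsto_integral_filter_of_dominated_convergence (fun ω => |W ω| ^ α)
      ?_ ?_ hmom ?_
    · exact Filter.Eventually.of_forall fun lam =>
        (by fun_prop : Measurable fun ω => min (lam ^ α) (|W ω| ^ α)).aestronglyMeasurable
    · filter_upwards [eventually_ge_atTop (1:ℝ)] with lam hlam
      refine ae_of_all _ fun ω => ?_
      have h0 : (0:ℝ) ≤ lam ^ α := (Real.rpow_pos_of_pos (by linarith) α).le
      rw [Real.norm_eq_abs, abs_of_nonneg (le_min h0 (by positivity))]
      exact min_le_right _ _
    · refine ae_of_all _ fun ω => ?_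
      refine Tendsto.congr' ?_ tendsto_const_nhds
      filter_upwards [hαtop.eventually_ge_atTop (|W ω| ^ α)] with lam h
      exact (min_eq_right h).symm
  refine Tendsto.congr' ?_ hDCT
  filter_upwards [eventually_gt_atTop (0:ℝ)] with lam hlam
  exact (key lam hlam).symm
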